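/- Suppose a ≠ 0. Then the quadratic form Q = a·z1² + b·z2² + c·z3² + 2d·z1z2 + 2e·z1z3 + 2f·z2z3 factors as Q = L1·L2 for some degree-one elements L1, L2 of S if and only if there exist X, Y ∈ k with X² = d² − μ12·ab and Y² = e² − μ13·ac such that D8(M) = μ21·(d+X)(e−Y) + μ23μ31·(d−X)(e+Y) − 2af = 0. -/

import Mathlib

/-- `Q = L·L'` in the skew polynomial algebra on three generators (relations
`zj·zi = μij·zi·zj` for `i < j`), expressed via coefficients; here
`L = p.1·z1 + p.2.1·z2 + p.2.2·z3` and `L' = q.1·z1 + q.2.1·z2 + q.2.2·z3`. -/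
def IsFactorization3 {k : Type*} [Field k] (μ12 μ13 μ23 a b c d e f : k)
    (p q : k × k × k) : Prop :=
  p.1 * q.1 = a ∧ p.2.1 * q.2.1 = b ∧ p.2.2 * q.2.2 = c ∧
  p.1 * q.2.1 + μ12 * p.2.1 * q.1 = 2 * d ∧
  p.1 * q.2.2 + μ13 * p.2.2 * q.1 = 2 * e ∧
  p.2.1 * q.2.2 + μ23 * p.2.2 * q.2.1 = 2 * f

/-- When `a ≠ 0`, the quadratic form
`Q = a·z1² + b·z2² + c·z3² + 2d·z1z2 + 2e·z1z3 + 2f·z2z3` factors as a product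
of two degree-one elements if and only if `D8(M) = 0` for some choice of square
roots `X, Y` with `X² = d² − μ12·ab` and `Y² = e² − μ13·ac`, where
`D8(M) = μ21·(d+X)(e−Y) + μ23·μ31·(d−X)(e+Y) − 2af`. -/
theorem factors_iff_D8_eq_zero {k : Type*} [Field k] [IsAlgClosed k]
    (h2 : (2 : k) ≠ 0) (μ12 μ13 μ23 : k)
    (hμ12 : μ12 ≠ 0) (hμ13 : μ13 ≠ 0) (hμ23 : μ23 ≠ 0)
    (a b c d e f : k) (ha : a ≠ 0) :
    (∃ p q : k × k × k, IsFactorization3 μ12 μ13 μ23 a b c d e f p q) ↔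
      ∃ X Y : k, X ^ 2 = d ^ 2 - μ12 * a * b ∧ Y ^ 2 = e ^ 2 - μ13 * a * c ∧
        μ12⁻¹ * (d + X) * (e - Y) + μ23 * μ13⁻¹ * (d - X) * (e + Y)
          - 2 * a * f = 0 := by
  have h12 : μ12⁻¹ * μ12 = 1 := inv_mul_cancel₀ hμ12
  have h13 : μ13⁻¹ * μ13 = 1 := inv_mul_cancel₀ hμ13
  constructor
  · rintro ⟨p, q, h1, hb, hc, h4, h5, h6⟩
    subst h1 hb hc
    refine ⟨μ12 * p.2.1 * q.1 - d, μ13 * p.2.2 * q.1 - e, ?_, ?_, ?_⟩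
    · linear_combination (μ12 * p.2.1 * q.1) * h4
    · linear_combination (μ13 * p.2.2 * q.1) * h5
    · linear_combination (p.2.1 * q.1 * (2 * e - μ13 * p.2.2 * q.1)) * h12 +
        (μ23 * p.2.2 * q.1 * (2 * d - μ12 * p.2.1 * q.1)) * h13 -
        (p.2.1 * q.1) * h5 - (μ23 * p.2.2 * q.1) * h4 + (p.1 * q.1) * h6
  · rintro ⟨X, Y, hX, hY, hD⟩
    have hD' : μ13 * ((d + X) * (e - Y)) + μ23 * μ12 * ((d - X) * (e + Y)) =
        2 * a * f * (μ12 * μ13) := by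
      linear_combination μ12 * μ13 * hD - μ13 * (d + X) * (e - Y) * h12 -
        μ23 * μ12 * (d - X) * (e + Y) * h13
    refine ⟨(1, (d + X) / (μ12 * a), (e + Y) / (μ13 * a)), (a, d - X, e - Y),
      ?_, ?_, ?_, ?_, ?_, ?_⟩ <;> simp only <;> field_simp
    · linear_combination -hX
    · linear_combination -hY
    · ring
    · ring
    · linear_combination hD'
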